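/- If M and N are Markov monoids, then their free product M ∗ N (the coproduct of M and N in the category of monoids) is a Markov monoid. -/

import Mathlib

open Function

/-- A language is regular if it is accepted by a deterministic finite automaton
with a finite state set. -/
def RegularLang {A : Type} (L : Language A) : Prop :=
  ∃ (Q : Type) (_ : Fintype Q) (M : DFA A Q), M.accepts = L

/-- The product of a nonempty word under the letter-assignment `φ`; the empty
word is sent to `none`. This is the induced map `φ⁺` on nonempty words. -/
def prodPlus {A S : Type} [Semigroup S] (φ : A → S) : List A → Option S
  | [] => none
  | a :: w => some (w.foldl (fun s b => s * φ b) (φ a))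

/-- The induced monoid homomorphism `φ*` from the free monoid of words. -/
def monProd {A M : Type} [Monoid M] (φ : A → M) (w : List A) : M :=
  (w.map φ).prod

/-- A semigroup Markov language for `S` over `A` (with respect to `φ`): a regular,
`+`-prefix-closed language of nonempty words mapping bijectively onto `S` under `φ⁺`. -/
structure IsSgMarkovLang {A S : Type} [Semigroup S] (φ : A → S) (L : Language A) : Prop where
  regular : RegularLang L
  not_empty_mem : [] ∉ L
  plus_prefix_closed : ∀ u v : List A, u ≠ [] → v ≠ [] → u ++ v ∈ L → u ∈ L
  unique_rep : ∀ s : S, ∃! w : List A, w ∈ L ∧ prodPlus φ w = some s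

/-- A robust semigroup Markov language: additionally every word of `L` has minimal
length among (nonempty) words representing the same element. -/
structure IsRobustSgMarkovLang {A S : Type} [Semigroup S] (φ : A → S) (L : Language A)
    extends IsSgMarkovLang φ L : Prop where
  min_length : ∀ w ∈ L, ∀ v : List A, prodPlus φ v = prodPlus φ w → w.length ≤ v.length

/-- A monoid Markov language for `M` over `A` (with respect to `φ`): a regular,
prefix-closed language mapping bijectively onto `M` under `φ*`. -/
structure IsMonMarkovLang {A M : Type} [Monoid M] (φ : A → M) (L : Language A) : Prop where
  regular : RegularLang L
  prefix_closed : ∀ u v : List A, u ++ v ∈ L → u ∈ L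
  unique_rep : ∀ m : M, ∃! w : List A, w ∈ L ∧ monProd φ w = m

/-- A robust monoid Markov language: additionally every word of `L` has minimal
length among words representing the same element. -/
structure IsRobustMonMarkovLang {A M : Type} [Monoid M] (φ : A → M) (L : Language A)
    extends IsMonMarkovLang φ L : Prop where
  min_length : ∀ w ∈ L, ∀ v : List A, monProd φ v = monProd φ w → w.length ≤ v.length

/-- `S` is Markov as a semigroup. -/
def SgMarkov (S : Type) [Semigroup S] : Prop :=
  ∃ (A : Type) (_ : Fintype A) (φ : A → S),
    (∀ s : S, ∃ w : List A, prodPlus φ w = some s) ∧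
    ∃ L : Language A, IsSgMarkovLang φ L

/-- `S` is robustly Markov (as a semigroup) with respect to some alphabet. -/
def SgRobustlyMarkov (S : Type) [Semigroup S] : Prop :=
  ∃ (A : Type) (_ : Fintype A) (φ : A → S),
    (∀ s : S, ∃ w : List A, prodPlus φ w = some s) ∧
    ∃ L : Language A, IsRobustSgMarkovLang φ L

/-- `S` is strongly Markov (as a semigroup). -/
def SgStronglyMarkov (S : Type) [Semigroup S] : Prop :=
  ∀ (A : Type) [Fintype A] (φ : A → S),
    (∀ s : S, ∃ w : List A, prodPlus φ w = some s) →
    ∃ L : Language A, IsRobustSgMarkovLang φ L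

/-- `M` is Markov as a monoid. -/
def MonMarkov (M : Type) [Monoid M] : Prop :=
  ∃ (A : Type) (_ : Fintype A) (φ : A → M),
    Surjective (monProd φ) ∧ ∃ L : Language A, IsMonMarkovLang φ L

/-- `M` is robustly Markov (as a monoid) with respect to some alphabet. -/
def MonRobustlyMarkov (M : Type) [Monoid M] : Prop :=
  ∃ (A : Type) (_ : Fintype A) (φ : A → M),
    Surjective (monProd φ) ∧ ∃ L : Language A, IsRobustMonMarkovLang φ L

/-- `M` is strongly Markov (as a monoid). -/
def MonStronglyMarkov (M : Type) [Monoid M] : Prop :=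
  ∀ (A : Type) [Fintype A] (φ : A → M),
    Surjective (monProd φ) →
    ∃ L : Language A, IsRobustMonMarkovLang φ L

namespace Stmt14

open Monoid List

/-! ### Basic facts about `monProd` -/

theorem monProd_nil {A M : Type} [Monoid M] (φ : A → M) : monProd φ [] = 1 := rfl

theorem monProd_append {A M : Type} [Monoid M] (φ : A → M) (u v : List A) :
    monProd φ (u ++ v) = monProd φ u * monProd φ v := by
  simp [monProd]

theorem monProd_comp {A M M' : Type} [Monoid M] [Monoid M'] (f : M →* M') (φ : A → M)
    (w : List A) : monProd (fun a => f (φ a)) w = f (monProd φ w) := by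
  rw [monProd, monProd, map_list_prod, List.map_map]
  rfl

theorem monProd_flatten {A M : Type} [Monoid M] (φ : A → M) :
    ∀ l : List (List A), monProd φ l.flatten = (l.map (monProd φ)).prod := by
  intro l
  induction l with
  | nil => rfl
  | cons x l ih => simp [monProd_append, ih]

/-! ### Basic facts about Markov languages -/

section MarkovFacts

variable {A M : Type} [Monoid M] {φ : A → M} {L : Language A}

theorem nil_mem (h : IsMonMarkovLang φ L) : [] ∈ L := by
  obtain ⟨w, ⟨hw, -⟩, -⟩ := h.unique_rep 1
  exact h.prefix_closed [] w hw

/-- The canonical representative of an element of `M`. -/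
noncomputable def rep (h : IsMonMarkovLang φ L) (m : M) : List A :=
  (h.unique_rep m).choose

theorem rep_mem (h : IsMonMarkovLang φ L) (m : M) : rep h m ∈ L :=
  (h.unique_rep m).choose_spec.1.1

theorem rep_prod (h : IsMonMarkovLang φ L) (m : M) : monProd φ (rep h m) = m :=
  (h.unique_rep m).choose_spec.1.2

theorem rep_eq (h : IsMonMarkovLang φ L) {m : M} {w : List A} (hw : w ∈ L)
    (hp : monProd φ w = m) : w = rep h m :=
  (h.unique_rep m).choose_spec.2 w ⟨hw, hp⟩

theorem rep_one (h : IsMonMarkovLang φ L) : rep h 1 = [] :=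
  (rep_eq h (nil_mem h) rfl).symm

theorem prod_ne_one (h : IsMonMarkovLang φ L) {w : List A} (hw : w ∈ L) (hne : w ≠ []) :
    monProd φ w ≠ 1 := fun h1 => hne (by rw [rep_eq h hw h1, rep_one h])

theorem rep_ne_nil (h : IsMonMarkovLang φ L) {m : M} (hm : m ≠ 1) : rep h m ≠ [] := by
  intro he
  apply hm
  rw [← rep_prod h m, he]
  rfl

end MarkovFacts

/-! ### Transfer along a `MulEquiv` -/

theorem monMarkov_congr {M M' : Type} [Monoid M] [Monoid M'] (e : M ≃* M') :
    MonMarkov M → MonMarkov M' := by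
  rintro ⟨A, fA, φ, hs, L, hL⟩
  have key : ∀ w : List A, monProd (fun a => e (φ a)) w = e (monProd φ w) := by
    intro w
    have := monProd_comp e.toMonoidHom φ w
    simpa using this
  refine ⟨A, fA, fun a => e (φ a), ?_, L, ?_⟩
  · intro m'
    obtain ⟨w, hw⟩ := hs (e.symm m')
    exact ⟨w, by rw [key, hw, MulEquiv.apply_symm_apply]⟩
  · refine ⟨hL.regular, hL.prefix_closed, ?_⟩
    intro m'
    obtain ⟨w, ⟨hw, hp⟩, hu⟩ := hL.unique_rep (e.symm m')
    refine ⟨w, ⟨hw, by rw [key, hp, MulEquiv.apply_symm_apply]⟩, ?_⟩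
    rintro v ⟨hv, hpv⟩
    refine hu v ⟨hv, ?_⟩
    rw [key] at hpv
    rw [← hpv, MulEquiv.symm_apply_apply]

end Stmt14

namespace Stmt14

open Monoid List

/-! ### The two-element family and the equivalence `CoprodI (F2 M N) ≃* Coprod M N` -/

/-- The `Bool`-indexed family with value `M` at `true` and `N` at `false`. -/
def F2 (M N : Type) : Bool → Type := fun b => cond b M N

instance instF2Monoid (M N : Type) [Monoid M] [Monoid N] : ∀ b, Monoid (F2 M N b)
  | true => inferInstanceAs (Monoid M)
  | false => inferInstanceAs (Monoid N)

/-- The family of maps into `Coprod M N`. -/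
def toCop (M N : Type) [Monoid M] [Monoid N] : ∀ b, F2 M N b →* Monoid.Coprod M N
  | true => Coprod.inl
  | false => Coprod.inr

/-- The coproduct of two monoids is equivalent to the `Bool`-indexed free product. -/
noncomputable def coprodEquiv (M N : Type) [Monoid M] [Monoid N] :
    CoprodI (F2 M N) ≃* Monoid.Coprod M N :=
  MonoidHom.toMulEquiv
    (CoprodI.lift (toCop M N))
    (Coprod.lift ((CoprodI.of (M := F2 M N) (i := true) : M →* CoprodI (F2 M N)))
      ((CoprodI.of (M := F2 M N) (i := false) : N →* CoprodI (F2 M N))))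
    (by
      apply CoprodI.ext_hom
      intro i
      cases i <;> ext x <;>
        simp only [MonoidHom.comp_apply, MonoidHom.id_apply, CoprodI.lift_of]
      · exact Coprod.lift_apply_inr _ _ x
      · exact Coprod.lift_apply_inl _ _ x)
    (by
      apply Coprod.hom_ext <;> ext x <;>
        simp only [MonoidHom.comp_apply, MonoidHom.id_apply, Coprod.lift_apply_inl,
          Coprod.lift_apply_inr]
      · exact CoprodI.lift_of (toCop M N) (i := true) x
      · exact CoprodI.lift_of (toCop M N) (i := false) x)

end Stmt14

namespace Stmt14

open Monoid List

section Blocks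

variable {A B M N : Type} [Monoid M] [Monoid N]

/-- A block: a word over one of the two alphabets. -/
abbrev Blk (A B : Type) := List A ⊕ List B

/-- Embedding of a block into words over `A ⊕ B`. -/
def emb : Blk A B → List (A ⊕ B) := Sum.elim (List.map Sum.inl) (List.map Sum.inr)

/-- A block is good if it is a nonempty word of the corresponding language. -/
def bok (LM : Language A) (LN : Language B) : Blk A B → Prop
  | .inl u => u ∈ LM ∧ u ≠ []
  | .inr v => v ∈ LN ∧ v ≠ []

/-- The alternation condition on adjacent blocks. -/
def balt (x y : Blk A B) : Prop := x.isLeft ≠ y.isLeft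

@[simp] theorem bok_inl {LM : Language A} {LN : Language B} {u : List A} :
    bok LM LN (.inl u) ↔ u ∈ LM ∧ u ≠ [] := Iff.rfl

@[simp] theorem bok_inr {LM : Language A} {LN : Language B} {v : List B} :
    bok LM LN (.inr v) ↔ v ∈ LN ∧ v ≠ [] := Iff.rfl

@[simp] theorem emb_inl (u : List A) : emb (Sum.inl u : Blk A B) = u.map Sum.inl := rfl
@[simp] theorem emb_inr (v : List B) : emb (Sum.inr v : Blk A B) = v.map Sum.inr := rfl

theorem balt_def {x y : Blk A B} : balt x y ↔ x.isLeft ≠ y.isLeft := Iff.rfl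

theorem emb_ne_nil {LM : Language A} {LN : Language B} {b : Blk A B} (h : bok LM LN b) :
    emb b ≠ [] := by
  cases b with
  | inl u => simpa using h.2
  | inr v => simpa using h.2

/-- The Markov language for the free product: alternating concatenations of good blocks. -/
def K (LM : Language A) (LN : Language B) : Language (A ⊕ B) :=
  { w | ∃ p : List (Blk A B), (∀ b ∈ p, bok LM LN b) ∧ p.Chain' balt ∧
      w = (p.map emb).flatten }

variable {φ : A → M} {ψ : B → N} {LM : Language A} {LN : Language B}

theorem prefix_decomp (hM : IsMonMarkovLang φ LM) (hN : IsMonMarkovLang ψ LN) :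
    ∀ p : List (Blk A B), (∀ b ∈ p, bok LM LN b) → p.Chain' balt →
    ∀ u v : List (A ⊕ B), u ++ v = (p.map emb).flatten →
    ∃ q : List (Blk A B), (∀ b ∈ q, bok LM LN b) ∧ q.Chain' balt ∧
      u = (q.map emb).flatten ∧
      ∀ bq ∈ q.head?, ∀ bp ∈ p.head?, (bq : Blk A B).isLeft = bp.isLeft := by
  intro p
  induction p with
  | nil =>
    intro _ _ u v huv
    simp only [List.map_nil, List.flatten_nil, List.append_eq_nil_iff] at huv
    exact ⟨[], by simp, List.isChain_nil, by simp [huv.1], by simp⟩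
  | cons b rest ih =>
    intro hok hch u v huv
    rw [List.map_cons, List.flatten_cons] at huv
    rcases List.append_eq_append_iff.mp huv with ⟨t, hbt, hv⟩ | ⟨t, hu, hR⟩
    · -- `u` is a prefix of `emb b`
      have hb : bok LM LN b := hok _ (List.mem_cons_self)
      cases b with
      | inl u₀ =>
        rw [emb_inl] at hbt
        obtain ⟨u₁, u₂, h12, hu1, -⟩ := List.map_eq_append_iff.mp hbt
        have hu₁L : u₁ ∈ LM := hM.prefix_closed u₁ u₂ (by rw [← h12]; exact hb.1)
        by_cases hnil : u₁ = []
        · exact ⟨[], by simp, List.isChain_nil, by simp [← hu1, hnil], by simp⟩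
        · refine ⟨[Sum.inl u₁], by simp [hu₁L, hnil], List.isChain_singleton _,
            by simp [hu1], ?_⟩
          intro bq hbq bp hbp
          simp only [List.head?_cons, Option.mem_def, Option.some_inj] at hbq hbp
          rw [← hbq, ← hbp]; rfl
      | inr v₀ =>
        rw [emb_inr] at hbt
        obtain ⟨v₁, v₂, h12, hv1, -⟩ := List.map_eq_append_iff.mp hbt
        have hv₁L : v₁ ∈ LN := hN.prefix_closed v₁ v₂ (by rw [← h12]; exact hb.1)
        by_cases hnil : v₁ = []
        · exact ⟨[], by simp, List.isChain_nil, by simp [← hv1, hnil], by simp⟩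
        · refine ⟨[Sum.inr v₁], by simp [hv₁L, hnil], List.isChain_singleton _,
            by simp [hv1], ?_⟩
          intro bq hbq bp hbp
          simp only [List.head?_cons, Option.mem_def, Option.some_inj] at hbq hbp
          rw [← hbq, ← hbp]; rfl
    · -- `u` extends beyond `emb b`
      obtain ⟨q, hqok, hqch, hqu, hqhead⟩ := ih (fun x hx => hok x (List.mem_cons_of_mem _ hx))
        hch.tail t v hR.symm
      refine ⟨b :: q, ?_, ?_, ?_, ?_⟩
      · intro x hx
        rcases List.mem_cons.mp hx with rfl | hx
        · exact hok _ (List.mem_cons_self)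
        · exact hqok x hx
      · show List.IsChain _ _
        rw [List.isChain_cons]
        refine ⟨?_, hqch⟩
        intro y hy
        cases q with
        | nil => simp at hy
        | cons bq q' =>
          simp only [List.head?_cons, Option.mem_def, Option.some_inj] at hy
          subst hy
          cases rest with
          | nil =>
            exfalso
            simp only [List.map_nil, List.flatten_nil, List.nil_eq, List.append_eq_nil_iff] at hR
            have : (List.map emb (bq :: q')).flatten ≠ [] := by
              rw [List.map_cons, List.flatten_cons]
              simp only [ne_eq, List.append_eq_nil_iff, not_and]
              intro h; exact absurd h (emb_ne_nil (hqok _ (List.mem_cons_self)))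
            exact this (by rw [← hqu, hR.1])
          | cons bp rest' =>
            have h1 : balt b bp := (List.isChain_cons_cons.mp hch).1
            have h2 : (bq : Blk A B).isLeft = bp.isLeft :=
              hqhead bq (by simp) bp (by simp)
            rw [balt_def] at h1 ⊢
            rw [h2]; exact h1
      · rw [List.map_cons, List.flatten_cons, hu, hqu]
      · intro bq hbq bp hbp
        simp only [List.head?_cons, Option.mem_def, Option.some_inj] at hbq hbp
        rw [← hbq, ← hbp]

theorem K_prefix_closed (hM : IsMonMarkovLang φ LM) (hN : IsMonMarkovLang ψ LN) :
    ∀ u v : List (A ⊕ B), u ++ v ∈ K LM LN → u ∈ K LM LN := by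
  intro u v hm
  obtain ⟨p, hok, hch, hw⟩ := hm
  obtain ⟨q, h1, h2, h3, -⟩ := prefix_decomp hM hN p hok hch u v hw
  exact ⟨q, h1, h2, h3⟩

end Blocks

end Stmt14

namespace Stmt14

open Monoid List

section Encode

variable {A B M N : Type} [Monoid M] [Monoid N]

/-- The letter assignment for the free product. -/
def chi (φ : A → M) (ψ : B → N) : A ⊕ B → CoprodI (F2 M N) :=
  Sum.elim (fun a => (CoprodI.of (M := F2 M N) (i := true) : M →* _) (φ a))
           (fun b => (CoprodI.of (M := F2 M N) (i := false) : N →* _) (ψ b))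

theorem monProd_chi_inl (φ : A → M) (ψ : B → N) (u : List A) :
    monProd (chi φ ψ) (u.map Sum.inl) =
      (CoprodI.of (M := F2 M N) (i := true) : M →* _) (monProd φ u) := by
  unfold monProd
  rw [map_list_prod, List.map_map]
  erw [List.map_map]
  rfl

theorem monProd_chi_inr (φ : A → M) (ψ : B → N) (v : List B) :
    monProd (chi φ ψ) (v.map Sum.inr) =
      (CoprodI.of (M := F2 M N) (i := false) : N →* _) (monProd ψ v) := by
  unfold monProd
  rw [map_list_prod, List.map_map]
  erw [List.map_map]
  rfl

variable {φ : A → M} {ψ : B → N} {LM : Language A} {LN : Language B}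

/-- The block associated to a letter of a reduced word. -/
noncomputable def blockOf (hM : IsMonMarkovLang φ LM) (hN : IsMonMarkovLang ψ LN) :
    (Σ i, F2 M N i) → Blk A B
  | ⟨true, m⟩ => Sum.inl (rep hM m)
  | ⟨false, n⟩ => Sum.inr (rep hN n)

/-- The letter associated to a block. -/
def letterOf (φ : A → M) (ψ : B → N) : Blk A B → Σ i, F2 M N i
  | .inl u => ⟨true, monProd φ u⟩
  | .inr v => ⟨false, monProd ψ v⟩

theorem blockOf_isLeft (hM : IsMonMarkovLang φ LM) (hN : IsMonMarkovLang ψ LN)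
    (l : Σ i, F2 M N i) : (blockOf hM hN l).isLeft = l.1 := by
  obtain ⟨i, x⟩ := l; cases i <;> rfl

theorem letterOf_fst (b : Blk A B) : (letterOf φ ψ b).1 = b.isLeft := by
  cases b <;> rfl

theorem letterOf_snd_ne_one (hM : IsMonMarkovLang φ LM) (hN : IsMonMarkovLang ψ LN)
    {b : Blk A B} (hb : bok LM LN b) : (letterOf φ ψ b).2 ≠ 1 := by
  cases b with
  | inl u => exact prod_ne_one hM hb.1 hb.2
  | inr v => exact prod_ne_one hN hb.1 hb.2

theorem blockOf_letterOf (hM : IsMonMarkovLang φ LM) (hN : IsMonMarkovLang ψ LN)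
    {b : Blk A B} (hb : bok LM LN b) : blockOf hM hN (letterOf φ ψ b) = b := by
  cases b with
  | inl u =>
    show Sum.inl (rep hM (monProd φ u)) = Sum.inl u
    rw [← rep_eq hM hb.1 rfl]
  | inr v =>
    show Sum.inr (rep hN (monProd ψ v)) = Sum.inr v
    rw [← rep_eq hN hb.1 rfl]

theorem bok_blockOf (hM : IsMonMarkovLang φ LM) (hN : IsMonMarkovLang ψ LN)
    {l : Σ i, F2 M N i} (hl : l.2 ≠ 1) : bok LM LN (blockOf hM hN l) := by
  obtain ⟨i, x⟩ := l; cases i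
  · exact ⟨rep_mem hN x, rep_ne_nil hN hl⟩
  · exact ⟨rep_mem hM x, rep_ne_nil hM hl⟩

theorem monProd_emb_blockOf (hM : IsMonMarkovLang φ LM) (hN : IsMonMarkovLang ψ LN)
    (l : Σ i, F2 M N i) :
    monProd (chi φ ψ) (emb (blockOf hM hN l)) = CoprodI.of l.2 := by
  obtain ⟨i, x⟩ := l; cases i
  · show monProd (chi φ ψ) (emb (Sum.inr (rep hN x))) = _
    rw [emb_inr, monProd_chi_inr]
    exact congrArg _ (rep_prod hN x)
  · show monProd (chi φ ψ) (emb (Sum.inl (rep hM x))) = _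
    rw [emb_inl, monProd_chi_inl]
    exact congrArg _ (rep_prod hM x)

/-- Encoding of a reduced word as a word over `A ⊕ B`. -/
noncomputable def enc (hM : IsMonMarkovLang φ LM) (hN : IsMonMarkovLang ψ LN)
    (w : CoprodI.Word (F2 M N)) : List (A ⊕ B) :=
  ((w.toList.map (blockOf hM hN)).map emb).flatten

theorem enc_mem_K (hM : IsMonMarkovLang φ LM) (hN : IsMonMarkovLang ψ LN)
    (w : CoprodI.Word (F2 M N)) : enc hM hN w ∈ K LM LN := by
  refine ⟨w.toList.map (blockOf hM hN), ?_, ?_, rfl⟩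
  · intro b hb
    obtain ⟨l, hl, rfl⟩ := List.mem_map.mp hb
    exact bok_blockOf hM hN (w.ne_one l hl)
  · show List.IsChain _ _
    rw [List.isChain_map]
    refine List.IsChain.imp ?_ w.chain_ne
    intro x y h
    rw [balt_def, blockOf_isLeft, blockOf_isLeft]
    exact h

theorem monProd_enc (hM : IsMonMarkovLang φ LM) (hN : IsMonMarkovLang ψ LN)
    (w : CoprodI.Word (F2 M N)) :
    monProd (chi φ ψ) (enc hM hN w) = CoprodI.Word.prod w := by
  rw [enc, monProd_flatten, CoprodI.Word.prod, List.map_map, List.map_map]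
  exact congrArg List.prod (List.map_congr_left fun l _ => monProd_emb_blockOf hM hN l)

theorem decode (hM : IsMonMarkovLang φ LM) (hN : IsMonMarkovLang ψ LN) :
    ∀ p : List (Blk A B), (∀ b ∈ p, bok LM LN b) → p.Chain' balt →
    ∃ w : CoprodI.Word (F2 M N), enc hM hN w = (p.map emb).flatten := by
  intro p hok hch
  refine ⟨⟨p.map (letterOf φ ψ), ?_, ?_⟩, ?_⟩
  · intro l hl
    obtain ⟨b, hb, rfl⟩ := List.mem_map.mp hl
    exact letterOf_snd_ne_one hM hN (hok b hb)
  · show List.IsChain _ _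
    rw [List.isChain_map]
    refine List.IsChain.imp ?_ hch
    intro x y h
    rw [letterOf_fst, letterOf_fst]
    exact h
  · show (((p.map (letterOf φ ψ)).map (blockOf hM hN)).map emb).flatten = _
    rw [List.map_map, List.map_map]
    have hpp : p.map ((emb ∘ blockOf hM hN) ∘ letterOf φ ψ) = p.map emb :=
      List.map_congr_left fun b hb =>
        congrArg emb (blockOf_letterOf hM hN (hok b hb))
    rw [hpp]

theorem K_unique_rep (hM : IsMonMarkovLang φ LM) (hN : IsMonMarkovLang ψ LN)
    (m : CoprodI (F2 M N)) :
    ∃! w, w ∈ K LM LN ∧ monProd (chi φ ψ) w = m := by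
  let e : CoprodI (F2 M N) ≃ CoprodI.Word (F2 M N) :=
    @CoprodI.Word.equiv Bool (F2 M N) _ instDecidableEqBool (fun i => Classical.decEq _)
  have hsymm : ∀ w : CoprodI.Word (F2 M N), e.symm w = CoprodI.Word.prod w := fun _ => rfl
  have hprod : CoprodI.Word.prod (e m) = m := by
    rw [← hsymm]
    exact e.symm_apply_apply m
  refine ⟨enc hM hN (e m), ⟨enc_mem_K hM hN (e m), by rw [monProd_enc, hprod]⟩, ?_⟩
  rintro u ⟨⟨p, hok, hch, rfl⟩, hpu⟩
  obtain ⟨w', hw'⟩ := decode hM hN p hok hch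
  rw [← hw']
  have h1 : CoprodI.Word.prod w' = m := by rw [← hpu, ← hw', monProd_enc]
  have h2 : w' = e m := by
    rw [← h1, ← hsymm]
    exact (e.apply_symm_apply w').symm
  rw [h2]

end Encode

end Stmt14

namespace Stmt14

open Monoid List

section Automaton

variable {A B M N QM QN : Type} [Monoid M] [Monoid N]

theorem bool_ne_false {b : Bool} (h : false ≠ b) : b = true := by
  cases b
  · exact absurd rfl h
  · rfl

theorem bool_ne_true {b : Bool} (h : true ≠ b) : b = false := by
  cases b
  · rfl
  · exact absurd rfl h

open Classical in
/-- The DFA recognizing `K LM LN`. -/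
noncomputable def pDFA (DM : DFA A QM) (DN : DFA B QN) :
    DFA (A ⊕ B) (Option (QM ⊕ QN)) where
  step s c :=
    match s, c with
    | some (.inl q), .inl a => some (.inl (DM.step q a))
    | some (.inl q), .inr b => if q ∈ DM.accept then some (.inr (DN.step DN.start b)) else none
    | some (.inr q), .inl a => if q ∈ DN.accept then some (.inl (DM.step DM.start a)) else none
    | some (.inr q), .inr b => some (.inr (DN.step q b))
    | none, _ => none
  start := some (.inl DM.start)
  accept := {s | (∃ q ∈ DM.accept, s = some (.inl q)) ∨ (∃ q ∈ DN.accept, s = some (.inr q))}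

variable (DM : DFA A QM) (DN : DFA B QN)

theorem pDFA_accept_inl {q : QM} :
    some (Sum.inl q) ∈ (pDFA DM DN).accept ↔ q ∈ DM.accept := by
  constructor
  · rintro (⟨q', hq', h⟩ | ⟨q', hq', h⟩)
    · simp only [Option.some_inj, Sum.inl.injEq] at h
      rwa [h]
    · simp at h
  · intro h
    exact Or.inl ⟨q, h, rfl⟩

theorem pDFA_accept_inr {q : QN} :
    some (Sum.inr q) ∈ (pDFA DM DN).accept ↔ q ∈ DN.accept := by
  constructor
  · rintro (⟨q', hq', h⟩ | ⟨q', hq', h⟩)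
    · simp at h
    · simp only [Option.some_inj, Sum.inr.injEq] at h
      rwa [h]
  · intro h
    exact Or.inr ⟨q, h, rfl⟩

theorem pDFA_step_inl_inl (q : QM) (a : A) :
    (pDFA DM DN).step (some (.inl q)) (.inl a) = some (.inl (DM.step q a)) := rfl

theorem pDFA_step_inr_inr (q : QN) (b : B) :
    (pDFA DM DN).step (some (.inr q)) (.inr b) = some (.inr (DN.step q b)) := rfl

theorem pDFA_step_none (c : A ⊕ B) : (pDFA DM DN).step none c = none := rfl

open Classical in
theorem pDFA_step_inl_inr_pos {q : QM} (h : q ∈ DM.accept) (b : B) :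
    (pDFA DM DN).step (some (.inl q)) (.inr b) = some (.inr (DN.step DN.start b)) := by
  show (if q ∈ DM.accept then _ else _) = _
  rw [if_pos h]

open Classical in
theorem pDFA_step_inl_inr_neg {q : QM} (h : q ∉ DM.accept) (b : B) :
    (pDFA DM DN).step (some (.inl q)) (.inr b) = none := by
  show (if q ∈ DM.accept then _ else _) = _
  rw [if_neg h]

open Classical in
theorem pDFA_step_inr_inl_pos {q : QN} (h : q ∈ DN.accept) (a : A) :
    (pDFA DM DN).step (some (.inr q)) (.inl a) = some (.inl (DM.step DM.start a)) := by
  show (if q ∈ DN.accept then _ else _) = _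
  rw [if_pos h]

open Classical in
theorem pDFA_step_inr_inl_neg {q : QN} (h : q ∉ DN.accept) (a : A) :
    (pDFA DM DN).step (some (.inr q)) (.inl a) = none := by
  show (if q ∈ DN.accept then _ else _) = _
  rw [if_neg h]

theorem evalFrom_cons {α σ : Type} (D : DFA α σ) (s : σ) (c : α) (w : List α) :
    D.evalFrom s (c :: w) = D.evalFrom (D.step s c) w := rfl

theorem pDFA_evalFrom_none : ∀ w : List (A ⊕ B), (pDFA DM DN).evalFrom none w = none
  | [] => rfl
  | c :: w => by
    rw [evalFrom_cons, pDFA_step_none]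
    exact pDFA_evalFrom_none w

theorem pDFA_evalFrom_inl : ∀ (u : List A) (q : QM),
    (pDFA DM DN).evalFrom (some (.inl q)) (u.map Sum.inl) = some (.inl (DM.evalFrom q u))
  | [], q => rfl
  | a :: u, q => by
    rw [List.map_cons, evalFrom_cons, pDFA_step_inl_inl, pDFA_evalFrom_inl u (DM.step q a)]
    rfl

theorem pDFA_evalFrom_inr : ∀ (v : List B) (q : QN),
    (pDFA DM DN).evalFrom (some (.inr q)) (v.map Sum.inr) = some (.inr (DN.evalFrom q v))
  | [], q => rfl
  | b :: v, q => by
    rw [List.map_cons, evalFrom_cons, pDFA_step_inr_inr, pDFA_evalFrom_inr v (DN.step q b)]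
    rfl

theorem pDFA_cross_inl {q : QM} (h : q ∈ DM.accept) {v : List B} (hv : v ≠ []) :
    (pDFA DM DN).evalFrom (some (.inl q)) (v.map Sum.inr) =
      some (.inr (DN.evalFrom DN.start v)) := by
  cases v with
  | nil => exact absurd rfl hv
  | cons b v' =>
    rw [List.map_cons, evalFrom_cons, pDFA_step_inl_inr_pos DM DN h, pDFA_evalFrom_inr]
    rfl

theorem pDFA_cross_inr {q : QN} (h : q ∈ DN.accept) {u : List A} (hu : u ≠ []) :
    (pDFA DM DN).evalFrom (some (.inr q)) (u.map Sum.inl) =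
      some (.inl (DM.evalFrom DM.start u)) := by
  cases u with
  | nil => exact absurd rfl hu
  | cons a u' =>
    rw [List.map_cons, evalFrom_cons, pDFA_step_inr_inl_pos DM DN h, pDFA_evalFrom_inl]
    rfl

variable {LM : Language A} {LN : Language B}

theorem pDFA_fwd (hMa : DM.accepts = LM) (hNa : DN.accepts = LN) :
    ∀ p : List (Blk A B), (∀ b ∈ p, bok LM LN b) → p.Chain' balt →
      (∀ q ∈ DM.accept, (∀ b ∈ p.head?, (b : Blk A B).isLeft = false) →
        (pDFA DM DN).evalFrom (some (.inl q)) ((p.map emb).flatten) ∈ (pDFA DM DN).accept) ∧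
      (∀ q ∈ DN.accept, (∀ b ∈ p.head?, (b : Blk A B).isLeft = true) →
        (pDFA DM DN).evalFrom (some (.inr q)) ((p.map emb).flatten) ∈ (pDFA DM DN).accept) := by
  intro p
  induction p with
  | nil =>
    intro _ _
    constructor
    · intro q hq _
      simp only [List.map_nil, List.flatten_nil, DFA.evalFrom_nil]
      exact (pDFA_accept_inl DM DN).mpr hq
    · intro q hq _
      simp only [List.map_nil, List.flatten_nil, DFA.evalFrom_nil]
      exact (pDFA_accept_inr DM DN).mpr hq
  | cons b rest ih =>
    intro hok hch
    have hb := hok b (List.mem_cons_self)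
    have ih' := ih (fun x hx => hok x (List.mem_cons_of_mem _ hx)) hch.tail
    have hrestside : ∀ y ∈ rest.head?, balt b y := by
      intro y hy
      cases rest with
      | nil => simp at hy
      | cons bp rest' =>
        simp only [List.head?_cons, Option.mem_def, Option.some_inj] at hy
        subst hy
        exact (List.isChain_cons_cons.mp hch).1
    constructor
    · intro q hq hhead
      have hside : (b : Blk A B).isLeft = false := hhead b (by simp)
      cases b with
      | inl u => simp at hside
      | inr v =>
        rw [List.map_cons, List.flatten_cons, DFA.evalFrom_of_append, emb_inr,
          pDFA_cross_inl DM DN hq hb.2]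
        have hacc : DN.evalFrom DN.start v ∈ DN.accept := by
          have hv : v ∈ DN.accepts := by rw [hNa]; exact hb.1
          exact (DFA.mem_accepts DN).mp hv
        refine ih'.2 _ hacc ?_
        intro y hy
        have h1 := hrestside y hy
        rw [balt_def] at h1
        simp only [Sum.isLeft_inr] at h1
        exact bool_ne_false h1
    · intro q hq hhead
      have hside : (b : Blk A B).isLeft = true := hhead b (by simp)
      cases b with
      | inr v => simp at hside
      | inl u =>
        rw [List.map_cons, List.flatten_cons, DFA.evalFrom_of_append, emb_inl,
          pDFA_cross_inr DM DN hq hb.2]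
        have hacc : DM.evalFrom DM.start u ∈ DM.accept := by
          have hu : u ∈ DM.accepts := by rw [hMa]; exact hb.1
          exact (DFA.mem_accepts DM).mp hu
        refine ih'.1 _ hacc ?_
        intro y hy
        have h1 := hrestside y hy
        rw [balt_def] at h1
        simp only [Sum.isLeft_inl] at h1
        exact bool_ne_true h1

theorem K_subset_accepts (hMa : DM.accepts = LM) (hNa : DN.accepts = LN)
    (hnilM : [] ∈ LM) : ∀ w ∈ K LM LN, w ∈ (pDFA DM DN).accepts := by
  rintro w ⟨p, hok, hch, rfl⟩
  have hstart : DM.start ∈ DM.accept := by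
    have h : ([] : List A) ∈ DM.accepts := by rw [hMa]; exact hnilM
    exact (DFA.mem_accepts DM).mp h
  rw [DFA.mem_accepts]
  show (pDFA DM DN).evalFrom (some (.inl DM.start)) _ ∈ _
  cases p with
  | nil =>
    simp only [List.map_nil, List.flatten_nil, DFA.evalFrom_nil]
    exact (pDFA_accept_inl DM DN).mpr hstart
  | cons b rest =>
    cases b with
    | inl u =>
      have hb := hok _ (List.mem_cons_self)
      rw [List.map_cons, List.flatten_cons, DFA.evalFrom_of_append, emb_inl,
        pDFA_evalFrom_inl]
      have hu : DM.evalFrom DM.start u ∈ DM.accept :=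
        (DFA.mem_accepts DM).mp (by rw [hMa]; exact hb.1)
      refine (pDFA_fwd DM DN hMa hNa rest
        (fun x hx => hok x (List.mem_cons_of_mem _ hx)) hch.tail).1 _ hu ?_
      intro y hy
      cases rest with
      | nil => simp at hy
      | cons bp rest' =>
        simp only [List.head?_cons, Option.mem_def, Option.some_inj] at hy
        subst hy
        have h1 := (List.isChain_cons_cons.mp hch).1
        rw [balt_def] at h1
        simp only [Sum.isLeft_inl] at h1
        exact bool_ne_true h1
    | inr v =>
      refine (pDFA_fwd DM DN hMa hNa (Sum.inr v :: rest) hok hch).1 _ hstart ?_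
      intro y hy
      simp only [List.head?_cons, Option.mem_def, Option.some_inj] at hy
      subst hy
      rfl

end Automaton

end Stmt14

namespace Stmt14

open Monoid List

section Automaton2

variable {A B QM QN : Type} (DM : DFA A QM) (DN : DFA B QN)
variable {LM : Language A} {LN : Language B}

theorem pDFA_inv (hMa : DM.accepts = LM) (hNa : DN.accepts = LN) :
    ∀ w : List (A ⊕ B),
      (∀ q : QM, (pDFA DM DN).evalFrom (pDFA DM DN).start w = some (.inl q) →
        ∃ (p : List (Blk A B)) (u : List A),
          (∀ b ∈ p, bok LM LN b) ∧ p.Chain' balt ∧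
          (∀ b ∈ p.getLast?, (b : Blk A B).isLeft = false) ∧ (u = [] → p = []) ∧
          w = (p.map emb).flatten ++ u.map Sum.inl ∧ q = DM.evalFrom DM.start u) ∧
      (∀ q : QN, (pDFA DM DN).evalFrom (pDFA DM DN).start w = some (.inr q) →
        ∃ (p : List (Blk A B)) (v : List B),
          (∀ b ∈ p, bok LM LN b) ∧ p.Chain' balt ∧
          (∀ b ∈ p.getLast?, (b : Blk A B).isLeft = true) ∧ v ≠ [] ∧
          w = (p.map emb).flatten ++ v.map Sum.inr ∧ q = DN.evalFrom DN.start v) := by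
  intro w
  induction w using List.reverseRecOn with
  | nil =>
    constructor
    · intro q hq
      simp only [DFA.evalFrom_nil] at hq
      obtain rfl : DM.start = q := by
        have : (pDFA DM DN).start = some (Sum.inl DM.start) := rfl
        rw [this] at hq
        simpa using hq
      exact ⟨[], [], by simp, List.isChain_nil, by simp, fun _ => rfl, by simp, rfl⟩
    · intro q hq
      simp only [DFA.evalFrom_nil] at hq
      have : (pDFA DM DN).start = some (Sum.inl DM.start) := rfl
      rw [this] at hq
      simp at hq
  | append_singleton w c ih =>
    cases hstate : (pDFA DM DN).evalFrom (pDFA DM DN).start w with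
    | none =>
      constructor <;> intro q hq <;>
        rw [DFA.evalFrom_append_singleton, hstate, pDFA_step_none] at hq <;> simp at hq
    | some s =>
      cases s with
      | inl q₀ =>
        obtain ⟨p, u, hok, hch, hlast, hpnil, hw, hq₀⟩ := ih.1 q₀ hstate
        cases c with
        | inl a =>
          constructor
          · intro q hq
            rw [DFA.evalFrom_append_singleton, hstate, pDFA_step_inl_inl] at hq
            obtain rfl : DM.step q₀ a = q := by simpa using hq
            refine ⟨p, u ++ [a], hok, hch, hlast, by simp, ?_, ?_⟩
            · rw [hw, List.map_append, List.append_assoc]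
              rfl
            · rw [hq₀, DFA.evalFrom_append_singleton]
          · intro q hq
            rw [DFA.evalFrom_append_singleton, hstate, pDFA_step_inl_inl] at hq
            simp at hq
        | inr b =>
          by_cases hacc : q₀ ∈ DM.accept
          · have hstep := pDFA_step_inl_inr_pos DM DN hacc b
            have huLM : u ∈ LM := by
              rw [← hMa]
              exact (DFA.mem_accepts DM).mpr (by rw [DFA.eval, ← hq₀]; exact hacc)
            constructor
            · intro q hq
              rw [DFA.evalFrom_append_singleton, hstate, hstep] at hq
              simp at hq
            · intro q hq
              rw [DFA.evalFrom_append_singleton, hstate, hstep] at hq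
              obtain rfl : DN.step DN.start b = q := by simpa using hq
              by_cases hu : u = []
              · have hp : p = [] := hpnil hu
                refine ⟨[], [b], by simp, List.isChain_nil, by simp, by simp, ?_, rfl⟩
                rw [hw, hp, hu]
                simp
              · refine ⟨p ++ [Sum.inl u], [b], ?_, ?_, ?_, by simp, ?_, rfl⟩
                · intro x hx
                  rcases List.mem_append.mp hx with hx | hx
                  · exact hok x hx
                  · simp only [List.mem_singleton] at hx
                    subst hx
                    exact ⟨huLM, hu⟩
                · show List.IsChain _ _
                  rw [List.isChain_append]
                  refine ⟨hch, List.isChain_singleton _, ?_⟩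
                  intro x hx y hy
                  simp only [List.head?_cons, Option.mem_def, Option.some_inj] at hy
                  subst hy
                  rw [balt_def, hlast x hx]
                  simp
                · intro x hx
                  rw [List.getLast?_concat] at hx
                  simp only [Option.mem_def, Option.some_inj] at hx
                  subst hx
                  rfl
                · rw [hw, List.map_append, List.flatten_append]
                  simp
          · constructor <;> intro q hq <;>
              rw [DFA.evalFrom_append_singleton, hstate,
                pDFA_step_inl_inr_neg DM DN hacc] at hq <;> simp at hq
      | inr q₀ =>
        obtain ⟨p, v, hok, hch, hlast, hvnil, hw, hq₀⟩ := ih.2 q₀ hstate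
        cases c with
        | inr b =>
          constructor
          · intro q hq
            rw [DFA.evalFrom_append_singleton, hstate, pDFA_step_inr_inr] at hq
            simp at hq
          · intro q hq
            rw [DFA.evalFrom_append_singleton, hstate, pDFA_step_inr_inr] at hq
            obtain rfl : DN.step q₀ b = q := by simpa using hq
            refine ⟨p, v ++ [b], hok, hch, hlast, by simp, ?_, ?_⟩
            · rw [hw, List.map_append, List.append_assoc]
              rfl
            · rw [hq₀, DFA.evalFrom_append_singleton]
        | inl a =>
          by_cases hacc : q₀ ∈ DN.accept
          · have hstep := pDFA_step_inr_inl_pos DM DN hacc a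
            have hvLN : v ∈ LN := by
              rw [← hNa]
              exact (DFA.mem_accepts DN).mpr (by rw [DFA.eval, ← hq₀]; exact hacc)
            constructor
            · intro q hq
              rw [DFA.evalFrom_append_singleton, hstate, hstep] at hq
              obtain rfl : DM.step DM.start a = q := by simpa using hq
              refine ⟨p ++ [Sum.inr v], [a], ?_, ?_, ?_, by simp, ?_, rfl⟩
              · intro x hx
                rcases List.mem_append.mp hx with hx | hx
                · exact hok x hx
                · simp only [List.mem_singleton] at hx
                  subst hx
                  exact ⟨hvLN, hvnil⟩
              · show List.IsChain _ _
                rw [List.isChain_append]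
                refine ⟨hch, List.isChain_singleton _, ?_⟩
                intro x hx y hy
                simp only [List.head?_cons, Option.mem_def, Option.some_inj] at hy
                subst hy
                rw [balt_def, hlast x hx]
                simp
              · intro x hx
                rw [List.getLast?_concat] at hx
                simp only [Option.mem_def, Option.some_inj] at hx
                subst hx
                rfl
              · rw [hw, List.map_append, List.flatten_append]
                simp
            · intro q hq
              rw [DFA.evalFrom_append_singleton, hstate, hstep] at hq
              simp at hq
          · constructor <;> intro q hq <;>
              rw [DFA.evalFrom_append_singleton, hstate,
                pDFA_step_inr_inl_neg DM DN hacc] at hq <;> simp at hq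

theorem pDFA_accepts_eq (hMa : DFA.accepts DM = LM) (hNa : DFA.accepts DN = LN)
    (hnilM : [] ∈ LM) : (pDFA DM DN).accepts = K LM LN := by
  ext w
  constructor
  · intro hw
    rw [DFA.mem_accepts] at hw
    rcases hw with ⟨q, hq, heq⟩ | ⟨q, hq, heq⟩
    · obtain ⟨p, u, hok, hch, hlast, hpnil, hweq, hq₀⟩ := (pDFA_inv DM DN hMa hNa w).1 q heq
      have huLM : u ∈ LM := by
        rw [← hMa]
        exact (DFA.mem_accepts DM).mpr (by rw [DFA.eval, ← hq₀]; exact hq)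
      by_cases hu : u = []
      · refine ⟨p, hok, hch, ?_⟩
        rw [hweq, hu]
        simp
      · refine ⟨p ++ [Sum.inl u], ?_, ?_, ?_⟩
        · intro x hx
          rcases List.mem_append.mp hx with hx | hx
          · exact hok x hx
          · simp only [List.mem_singleton] at hx
            subst hx
            exact ⟨huLM, hu⟩
        · show List.IsChain _ _
          rw [List.isChain_append]
          refine ⟨hch, List.isChain_singleton _, ?_⟩
          intro x hx y hy
          simp only [List.head?_cons, Option.mem_def, Option.some_inj] at hy
          subst hy
          rw [balt_def, hlast x hx]
          simp
        · rw [hweq, List.map_append, List.flatten_append]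
          simp
    · obtain ⟨p, v, hok, hch, hlast, hvnil, hweq, hq₀⟩ := (pDFA_inv DM DN hMa hNa w).2 q heq
      have hvLN : v ∈ LN := by
        rw [← hNa]
        exact (DFA.mem_accepts DN).mpr (by rw [DFA.eval, ← hq₀]; exact hq)
      refine ⟨p ++ [Sum.inr v], ?_, ?_, ?_⟩
      · intro x hx
        rcases List.mem_append.mp hx with hx | hx
        · exact hok x hx
        · simp only [List.mem_singleton] at hx
          subst hx
          exact ⟨hvLN, hvnil⟩
      · show List.IsChain _ _
        rw [List.isChain_append]
        refine ⟨hch, List.isChain_singleton _, ?_⟩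
        intro x hx y hy
        simp only [List.head?_cons, Option.mem_def, Option.some_inj] at hy
        subst hy
        rw [balt_def, hlast x hx]
        simp
      · rw [hweq, List.map_append, List.flatten_append]
        simp
  · exact K_subset_accepts DM DN hMa hNa hnilM w

theorem K_regular (hM : RegularLang LM) (hN : RegularLang LN) (hnilM : [] ∈ LM) :
    RegularLang (K LM LN) := by
  obtain ⟨QM, fQM, DM, hMa⟩ := hM
  obtain ⟨QN, fQN, DN, hNa⟩ := hN
  exact ⟨Option (QM ⊕ QN), inferInstance, pDFA DM DN, pDFA_accepts_eq DM DN hMa hNa hnilM⟩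

end Automaton2

end Stmt14

namespace Stmt14

open Monoid

theorem monMarkov_coprodI {M N : Type} [Monoid M] [Monoid N]
    (hM : MonMarkov M) (hN : MonMarkov N) : MonMarkov (CoprodI (F2 M N)) := by
  obtain ⟨A, fA, φ, -, LM, hLM⟩ := hM
  obtain ⟨B, fB, ψ, -, LN, hLN⟩ := hN
  letI := fA
  letI := fB
  refine ⟨A ⊕ B, inferInstance, chi φ ψ, ?_, K LM LN, ?_, ?_, ?_⟩
  · intro m
    obtain ⟨w, ⟨-, hwp⟩, -⟩ := K_unique_rep hLM hLN m
    exact ⟨w, hwp⟩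
  · exact K_regular hLM.regular hLN.regular (nil_mem hLM)
  · exact K_prefix_closed hLM hLN
  · exact K_unique_rep hLM hLN

end Stmt14


/-- The free product (monoid coproduct) of two Markov monoids is a Markov monoid. -/
theorem stmt14 {M N : Type} [Monoid M] [Monoid N]
    (hM : MonMarkov M) (hN : MonMarkov N) : MonMarkov (Monoid.Coprod M N) := by
  exact Stmt14.monMarkov_congr (Stmt14.coprodEquiv M N) (Stmt14.monMarkov_coprodI hM hN)
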